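/- For every n ≥ 1 and every finite nonempty set M ⊆ ℤⁿ there exist coefficients c : M → ℝ and a line L ⊆ ℝⁿ such that the intersection of L with the tropical hypersurface T associated to (M, c) is finite and consists of exactly #M − 1 points. -/

import Mathlib

lemma exists_good_v (n : ℕ) (hn : 1 ≤ n) (D : Finset (Fin n → ℤ)) (hD : ∀ w ∈ D, w ≠ 0) :
    ∃ v : Fin n → ℝ, v ≠ 0 ∧ ∀ w ∈ D, (∑ i, v i * (w i : ℝ)) ≠ 0 := by
  classical
  induction D using Finset.induction_on with
  | empty =>
    refine ⟨fun i => if i = ⟨0, hn⟩ then 1 else 0, ?_, by simp⟩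
    intro h
    have := congrFun h ⟨0, hn⟩
    simp at this
  | @insert a D ha IH =>
    obtain ⟨v, hv0, hv⟩ := IH (fun w hw => hD w (Finset.mem_insert_of_mem hw))
    have ha0 : a ≠ 0 := hD a (Finset.mem_insert_self a D)
    have hp : (0:ℝ) < ∑ i, (a i : ℝ) * (a i : ℝ) := by
      obtain ⟨i, hi⟩ := Function.ne_iff.mp ha0
      refine Finset.sum_pos' (fun j _ => mul_self_nonneg _) ⟨i, Finset.mem_univ _, ?_⟩
      have : (a i : ℝ) ≠ 0 := by exact_mod_cast hi
      exact mul_self_pos.mpr this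
    set bad : (Fin n → ℤ) → ℝ := fun w => -(∑ i, v i * (w i : ℝ)) / (∑ i, (a i : ℝ) * (w i : ℝ)) with hbad
    obtain ⟨t, ht⟩ := Infinite.exists_notMem_finset ((insert a D).image bad)
    set v' : Fin n → ℝ := fun i => v i + t * (a i : ℝ) with hv'
    have key : ∀ w ∈ insert a D, (∑ i, v' i * (w i : ℝ)) ≠ 0 := by
      intro w hw hzero
      have hexp : (∑ i, v' i * (w i : ℝ))
          = (∑ i, v i * (w i : ℝ)) + t * (∑ i, (a i : ℝ) * (w i : ℝ)) := by
        rw [Finset.mul_sum, ← Finset.sum_add_distrib]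
        congr 1; ext i; simp [hv']; ring
      rw [hexp] at hzero
      by_cases hB : (∑ i, (a i : ℝ) * (w i : ℝ)) = 0
      · rcases Finset.mem_insert.mp hw with rfl | hwD
        · exact absurd hB (ne_of_gt hp)
        · exact hv w hwD (by linarith [hzero, hB ▸ hzero])
      · apply ht
        apply Finset.mem_image.mpr ⟨w, hw, ?_⟩
        simp only [hbad]
        field_simp
        linarith
    refine ⟨v', ?_, key⟩
    intro h
    exact key a (Finset.mem_insert_self a D) (by simp [h])

/-- Recursively defined coefficients making line `k` meet line `k+1` at `t = k`. -/
noncomputable def ccAux (E : ℕ → ℝ) : ℕ → ℝ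
  | 0 => 0
  | k + 1 => ccAux E k + k * (E k - E (k + 1))

/-- The `k`-th line. -/
noncomputable def GAux (E : ℕ → ℝ) (k : ℕ) (t : ℝ) : ℝ := t * E k + ccAux E k

lemma GAux_diff (E : ℕ → ℝ) (k : ℕ) (t : ℝ) :
    GAux E (k + 1) t - GAux E k t = (E (k + 1) - E k) * (t - k) := by
  simp only [GAux, ccAux]; ring

lemma GAux_max (E : ℕ → ℝ) (m : ℕ) (hE : ∀ k, k + 1 < m → E k < E (k + 1))
    (j : ℕ) (hj : j < m) : ∀ k < m, GAux E k (j : ℝ) ≤ GAux E j (j : ℝ) := by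
  intro k hk
  rcases le_or_gt k j with hkj | hjk
  · -- climb up from k to j
    have : ∀ i, k ≤ i → i ≤ j → GAux E k (j : ℝ) ≤ GAux E i (j : ℝ) := by
      intro i hki
      induction i, hki using Nat.le_induction with
      | base => intro _; exact le_rfl
      | succ i hki ih =>
        intro hij
        have h1 : GAux E k (j:ℝ) ≤ GAux E i (j:ℝ) := ih (by omega)
        have h2 : GAux E i (j:ℝ) ≤ GAux E (i+1) (j:ℝ) := by
          have hd := GAux_diff E i (j:ℝ)
          have hEi := hE i (by omega)
          have : (i:ℝ) ≤ (j:ℝ) := by exact_mod_cast (by omega : i ≤ j)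
          nlinarith
        linarith
    exact this j hkj le_rfl
  · -- climb down from j to k
    have : ∀ i, j ≤ i → i < m → GAux E i (j : ℝ) ≤ GAux E j (j : ℝ) := by
      intro i hji
      induction i, hji using Nat.le_induction with
      | base => intro _; exact le_rfl
      | succ i hji ih =>
        intro him
        have h2 : GAux E (i+1) (j:ℝ) ≤ GAux E i (j:ℝ) := by
          have hd := GAux_diff E i (j:ℝ)
          have hEi := hE i him
          have : (j:ℝ) ≤ (i:ℝ) := by exact_mod_cast (by omega : j ≤ i)
          nlinarith
        exact le_trans h2 (ih (by omega))
    exact this k hjk.le hk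

/-- The value of the tropical monomial with exponent `α` and coefficient `c α` at `x`. -/
noncomputable def tropVal (n : ℕ) (c : (Fin n → ℤ) → ℝ) (α : Fin n → ℤ) (x : Fin n → ℝ) : ℝ :=
  (∑ i, x i * (α i : ℝ)) + c α

/-- The tropical hypersurface associated to the support `M` and coefficients `c`:
the set of points where the maximum of the tropical monomials is attained at least twice. -/
def tropHypersurface (n : ℕ) (M : Finset (Fin n → ℤ)) (c : (Fin n → ℤ) → ℝ) :
    Set (Fin n → ℝ) :=
  {x | ∃ α ∈ M, ∃ β ∈ M, α ≠ β ∧ tropVal n c α x = tropVal n c β x ∧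
    ∀ γ ∈ M, tropVal n c γ x ≤ tropVal n c α x}

theorem stmt1 (n : ℕ) (hn : 1 ≤ n) (M : Finset (Fin n → ℤ)) (hM : M.Nonempty) :
    ∃ c : (Fin n → ℤ) → ℝ, ∃ u v : Fin n → ℝ, v ≠ 0 ∧
      ((Set.range fun t : ℝ => u + t • v) ∩ tropHypersurface n M c).Finite ∧
      ((Set.range fun t : ℝ => u + t • v) ∩ tropHypersurface n M c).ncard = M.card - 1 := by
  classical
  -- generic direction
  set D : Finset (Fin n → ℤ) := ((M ×ˢ M).filter fun p => p.1 ≠ p.2).image fun p => p.1 - p.2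
    with hDdef
  have hD : ∀ w ∈ D, w ≠ 0 := by
    intro w hw
    obtain ⟨p, hp, rfl⟩ := Finset.mem_image.mp hw
    exact sub_ne_zero.mpr (Finset.mem_filter.mp hp).2
  obtain ⟨v, hv0, hv⟩ := exists_good_v n hn D hD
  set s : (Fin n → ℤ) → ℝ := fun α => ∑ i, v i * (α i : ℝ) with hsdef
  have hsne : ∀ α ∈ M, ∀ β ∈ M, α ≠ β → s α ≠ s β := by
    intro α hα β hβ hne heq
    have hmem : α - β ∈ D := Finset.mem_image.mpr
      ⟨(α, β), Finset.mem_filter.mpr ⟨Finset.mem_product.mpr ⟨hα, hβ⟩, hne⟩, rfl⟩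
    apply hv _ hmem
    have : ∀ i, v i * (((α - β) i : ℤ) : ℝ) = v i * (α i : ℝ) - v i * (β i : ℝ) := by
      intro i; simp [Pi.sub_apply]; ring
    rw [Finset.sum_congr rfl fun i _ => this i, Finset.sum_sub_distrib]
    simpa [hsdef] using sub_eq_zero.mpr heq
  set m : ℕ := M.card with hmdef
  set S : Finset ℝ := M.image s with hSdef
  have hScard : S.card = m := Finset.card_image_of_injOn fun α hα β hβ h => by
    by_contra hne; exact hsne α hα β hβ hne h
  set e : Fin m ≃o {x // x ∈ S} := S.orderIsoOfFin hScard with hedef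
  set E : ℕ → ℝ := fun k => if h : k < m then (e ⟨k, h⟩ : ℝ) else 0 with hEdef
  have hE : ∀ k, k + 1 < m → E k < E (k + 1) := by
    intro k hk
    simp only [hEdef]
    rw [dif_pos (by omega : k < m), dif_pos hk]
    exact_mod_cast e.strictMono (by simp [Fin.mk_lt_mk])
  -- coefficients
  set c : (Fin n → ℤ) → ℝ :=
    fun α => if h : s α ∈ S then ccAux E ((e.symm ⟨s α, h⟩ : Fin m) : ℕ) else 0 with hcdef
  have hmemS : ∀ α ∈ M, s α ∈ S := fun α hα => Finset.mem_image_of_mem s hα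
  set idx : (Fin n → ℤ) → ℕ :=
    fun α => if h : s α ∈ S then ((e.symm ⟨s α, h⟩ : Fin m) : ℕ) else 0 with hidxdef
  have hidxval : ∀ α, ∀ hα : α ∈ M, idx α = ((e.symm ⟨s α, hmemS α hα⟩ : Fin m) : ℕ) := by
    intro α hα
    simp only [hidxdef]
    rw [dif_pos (hmemS α hα)]
  have hidxlt : ∀ α ∈ M, idx α < m := by
    intro α hα; rw [hidxval α hα]; exact (e.symm _).isLt
  have hEidx : ∀ α ∈ M, E (idx α) = s α := by
    intro α hα
    simp only [hEdef]
    rw [dif_pos (hidxlt α hα)]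
    have h2 : (⟨idx α, hidxlt α hα⟩ : Fin m) = e.symm ⟨s α, hmemS α hα⟩ := by
      ext; exact hidxval α hα
    rw [h2, OrderIso.apply_symm_apply]
  have hcidx : ∀ α ∈ M, c α = ccAux E (idx α) := by
    intro α hα
    simp only [hcdef, hidxval α hα]
    rw [dif_pos (hmemS α hα)]
  have hval : ∀ α ∈ M, ∀ (t : ℝ),
      tropVal n c α ((0 : Fin n → ℝ) + t • v) = GAux E (idx α) t := by
    intro α hα t
    have hx : ∀ i, ((0 : Fin n → ℝ) + t • v) i * (α i : ℝ) = t * (v i * (α i : ℝ)) := by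
      intro i; simp [smul_eq_mul]; ring
    rw [tropVal, Finset.sum_congr rfl fun i _ => hx i, ← Finset.mul_sum]
    rw [hcidx α hα, GAux, hEidx α hα, hsdef]
  have hidxinj : ∀ α ∈ M, ∀ β ∈ M, idx α = idx β → α = β := by
    intro α hα β hβ h
    by_contra hne
    apply hsne α hα β hβ hne
    rw [hidxval α hα, hidxval β hβ] at h
    have hfin : (e.symm ⟨s α, hmemS α hα⟩) = (e.symm ⟨s β, hmemS β hβ⟩) :=
      Fin.val_injective h
    have := congrArg e hfin
    rw [OrderIso.apply_symm_apply, OrderIso.apply_symm_apply] at this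
    exact congrArg Subtype.val this
  have hidxsurj : ∀ k, k < m → ∃ α ∈ M, idx α = k := by
    intro k hk
    have hmem : ((e ⟨k, hk⟩ : {x // x ∈ S}) : ℝ) ∈ S := (e ⟨k, hk⟩).2
    obtain ⟨α, hα, hs⟩ := Finset.mem_image.mp hmem
    refine ⟨α, hα, ?_⟩
    rw [hidxval α hα]
    have h2 : (⟨s α, hmemS α hα⟩ : {x // x ∈ S}) = e ⟨k, hk⟩ := Subtype.ext hs
    rw [h2, OrderIso.symm_apply_apply]
  -- key characterization of the intersection with the line
  have key : ∀ t : ℝ, ((0 : Fin n → ℝ) + t • v) ∈ tropHypersurface n M c ↔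
      ∃ j : ℕ, j + 1 < m ∧ t = j := by
    intro t
    constructor
    · rintro ⟨α, hα, β, hβ, hne, heq, hmax⟩
      rw [hval α hα] at heq hmax
      rw [hval β hβ] at heq
      have hmax' : ∀ k < m, GAux E k t ≤ GAux E (idx α) t := by
        intro k hk
        obtain ⟨γ, hγ, rfl⟩ := hidxsurj k hk
        have := hmax γ hγ
        rwa [hval γ hγ] at this
      have hab : idx α ≠ idx β := fun h => hne (hidxinj α hα β hβ h)
      -- symmetric sub-argument
      have sub : ∀ a b : ℕ, a < b → b < m → GAux E a t = GAux E b t →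
          (∀ k < m, GAux E k t ≤ GAux E a t) → ∃ j : ℕ, j + 1 < m ∧ t = j := by
        intro a b hab hbm heqab hmaxa
        obtain ⟨b', rfl⟩ : ∃ b', b = b' + 1 := ⟨b - 1, by omega⟩
        have h1 : GAux E (a + 1) t ≤ GAux E a t := hmaxa (a + 1) (by omega)
        have h2 : GAux E b' t ≤ GAux E (b' + 1) t := by
          rw [← heqab]; exact hmaxa b' (by omega)
        have hd1 := GAux_diff E a t
        have hd2 := GAux_diff E b' t
        have hE1 := hE a (by omega)
        have hE2 := hE b' (by omega)
        have hta : t ≤ (a : ℝ) := by nlinarith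
        have htb : (b' : ℝ) ≤ t := by nlinarith
        have hab' : (a : ℝ) ≤ (b' : ℝ) := by exact_mod_cast (by omega : a ≤ b')
        refine ⟨a, by omega, le_antisymm hta (by linarith)⟩
      rcases lt_or_gt_of_ne hab with h | h
      · exact sub _ _ h (hidxlt β hβ) heq hmax'
      · refine sub _ _ h (hidxlt α hα) heq.symm ?_
        intro k hk
        rw [← heq]; exact hmax' k hk
    · rintro ⟨j, hj, rfl⟩
      obtain ⟨α, hα, hia⟩ := hidxsurj j (by omega)
      obtain ⟨β, hβ, hib⟩ := hidxsurj (j + 1) hj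
      refine ⟨α, hα, β, hβ, ?_, ?_, ?_⟩
      · intro h; subst h; rw [hia] at hib; omega
      · rw [hval α hα, hval β hβ, hia, hib]
        have := GAux_diff E j (j : ℝ)
        have : GAux E (j + 1) (j : ℝ) - GAux E j (j : ℝ) = 0 := by
          rw [GAux_diff]; ring
        linarith
      · intro γ hγ
        rw [hval γ hγ, hval α hα, hia]
        exact GAux_max E m hE j (by omega) _ (hidxlt γ hγ)
  -- assemble
  have hinj : Function.Injective (fun t : ℝ => (0 : Fin n → ℝ) + t • v) := by
    intro t t' h
    obtain ⟨i, hi⟩ := Function.ne_iff.mp hv0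
    have := congrFun h i
    simp [smul_eq_mul] at this
    tauto
  have hset : ((Set.range fun t : ℝ => (0 : Fin n → ℝ) + t • v) ∩ tropHypersurface n M c)
      = (fun t : ℝ => (0 : Fin n → ℝ) + t • v) ''
        (((Finset.range (m - 1)).image fun j : ℕ => (j : ℝ)) : Finset ℝ) := by
    ext x
    constructor
    · rintro ⟨⟨t, rfl⟩, hT⟩
      obtain ⟨j, hj, rfl⟩ := (key t).mp hT
      refine ⟨(j : ℝ), ?_, rfl⟩
      simp only [Finset.coe_image, Set.mem_image, Finset.mem_coe, Finset.mem_range]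
      exact ⟨j, by omega, rfl⟩
    · rintro ⟨t, ht, rfl⟩
      simp [Finset.mem_image] at ht
      obtain ⟨j, hj, rfl⟩ := ht
      exact ⟨⟨(j : ℝ), rfl⟩, (key _).mpr ⟨j, by omega, rfl⟩⟩
  refine ⟨c, 0, v, hv0, ?_, ?_⟩
  · exact hset ▸ (Set.Finite.image _ (Finset.finite_toSet _))
  · rw [hset, Set.ncard_image_of_injective _ hinj, Set.ncard_coe_finset,
      Finset.card_image_of_injective _ Nat.cast_injective, Finset.card_range]
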